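/- Let C be a category with finite limits satisfying Precoherent (so the coherent topology on C is defined, generated by finite effective epimorphic families), and let ŷ : C ⥤ Sheaf (coherentTopology C) (Type) be the sheafified Yoneda embedding. Let E and F be Grothendieck topoi, f^* ⊣ f_* an adjunction with f^* : F ⥤ E preserving finite limits and with f_* : E ⥤ F preserving finite coproducts and epimorphisms (a flat geometric morphism), and let x^* : Sheaf (coherentTopology C) (Type) ⥤ E preserve finite limits and small colimits. Then for every finite effective epimorphic family {p_i : c_i ⟶ c} in C, the images (f_* ∘ x^* ∘ ŷ).map p_i form a jointly epimorphic family in F. (Coherent topoi are formally coherent: this is the continuity step showing they are weakly right Kan injective with respect to flat geometric morphisms.) -/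

import Mathlib

universe u

open CategoryTheory Limits

lemma aux_joint_epi {C : Type u} [SmallCategory C] [Precoherent C]
    {α : Type} [Finite α] {c : C} (c' : α → C) (p : ∀ i, c' i ⟶ c)
    (hp : EffectiveEpiFamily c' p) {Z : Sheaf (coherentTopology C) (Type u)}
    (u v : (yoneda ⋙ presheafToSheaf (coherentTopology C) (Type u)).obj c ⟶ Z)
    (h : ∀ i, (yoneda ⋙ presheafToSheaf (coherentTopology C) (Type u)).map (p i) ≫ u =
      (yoneda ⋙ presheafToSheaf (coherentTopology C) (Type u)).map (p i) ≫ v) :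
    u = v := by
  have hsheaf : Presieve.IsSheafFor Z.val (Presieve.ofArrows c' p) :=
    ((isSheaf_coherent Z.val).mp
      ((isSheaf_iff_isSheaf_of_type _ _).mp Z.cond)) c α c' p hp
  have hsep : Presieve.IsSeparatedFor Z.val (Presieve.ofArrows c' p) :=
    Presieve.IsSheafFor.isSeparatedFor hsheaf
  set A := (sheafificationAdjunction (coherentTopology C) (Type u)).homEquiv (yoneda.obj c) Z
  apply A.injective
  apply yonedaEquiv.injective
  set x := yonedaEquiv (A u)
  set y := yonedaEquiv (A v)
  have key : ∀ i, Z.val.map (p i).op x = Z.val.map (p i).op y := by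
    intro i
    have hu : Z.val.map (p i).op x =
        yonedaEquiv (((sheafificationAdjunction (coherentTopology C)
          (Type u)).homEquiv (yoneda.obj (c' i)) Z)
          ((presheafToSheaf (coherentTopology C) (Type u)).map (yoneda.map (p i)) ≫ u)) := by
      rw [Adjunction.homEquiv_naturality_left]
      exact yonedaEquiv_naturality _ _
    have hv : Z.val.map (p i).op y =
        yonedaEquiv (((sheafificationAdjunction (coherentTopology C)
          (Type u)).homEquiv (yoneda.obj (c' i)) Z)
          ((presheafToSheaf (coherentTopology C) (Type u)).map (yoneda.map (p i)) ≫ v)) := by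
      rw [Adjunction.homEquiv_naturality_left]
      exact yonedaEquiv_naturality _ _
    rw [hu, hv]
    congr 2
    exact h i
  exact hsep (fun Y f hf => Z.val.map f.op x) x y
    (fun Y f hf => rfl)
    (by rintro Y f ⟨i⟩; exact (key i).symm)

/-- Coherent topoi are formally coherent (continuity step): if `f^* ⊣ f_*` is a flat
geometric morphism (`f_*` preserves finite coproducts and epimorphisms) and `x^*` is a
point of the coherent topos `Sh(C, coherentTopology C)` in `E`, then the composite
`f_* ∘ x^* ∘ ŷ : C ⥤ F` sends every finite effective epimorphic family of `C` to a
jointly epimorphic family of `F`. -/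
theorem statement13 {C : Type u} [SmallCategory C] [HasFiniteLimits C] [Precoherent C]
    {D₁ D₂ : Type u} [SmallCategory D₁] [SmallCategory D₂]
    (J : GrothendieckTopology D₁) (K : GrothendieckTopology D₂)
    (fstar : Sheaf K (Type u) ⥤ Sheaf J (Type u))
    (fsub : Sheaf J (Type u) ⥤ Sheaf K (Type u))
    (adj : fstar ⊣ fsub) [PreservesFiniteLimits fstar]
    [PreservesFiniteCoproducts fsub] [fsub.PreservesEpimorphisms]
    (xstar : Sheaf (coherentTopology C) (Type u) ⥤ Sheaf J (Type u))
    [PreservesFiniteLimits xstar] [PreservesColimitsOfSize.{u, u} xstar]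
    {α : Type} [Finite α] {c : C} (c' : α → C) (p : ∀ i, c' i ⟶ c)
    (hp : EffectiveEpiFamily c' p) :
    ∀ {Z : Sheaf K (Type u)}
      (u v : (((yoneda ⋙ presheafToSheaf (coherentTopology C) (Type u)) ⋙
        xstar ⋙ fsub).obj c) ⟶ Z),
      (∀ i, (((yoneda ⋙ presheafToSheaf (coherentTopology C) (Type u)) ⋙
        xstar ⋙ fsub).map (p i)) ≫ u =
        (((yoneda ⋙ presheafToSheaf (coherentTopology C) (Type u)) ⋙
        xstar ⋙ fsub).map (p i)) ≫ v) → u = v := by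
  intro Z u v h
  have : Fintype α := Fintype.ofFinite α
  have : HasColimitsOfShape (Discrete α) (Type u) := inferInstance
  have : HasColimitsOfShape (Discrete α) (Sheaf (coherentTopology C) (Type u)) :=
    ⟨fun _ => HasColimit.mk ⟨Sheaf.sheafifyCocone (colimit.cocone _),
      Sheaf.isColimitSheafifyCocone _ (colimit.isColimit _)⟩⟩
  have : HasColimitsOfShape (Discrete α) (Sheaf K (Type u)) :=
    ⟨fun _ => HasColimit.mk ⟨Sheaf.sheafifyCocone (colimit.cocone _),
      Sheaf.isColimitSheafifyCocone _ (colimit.isColimit _)⟩⟩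
  let Y : C ⥤ Sheaf (coherentTopology C) (Type u) :=
    yoneda ⋙ presheafToSheaf (coherentTopology C) (Type u)
  let F1 : Sheaf (coherentTopology C) (Type u) ⥤ Sheaf K (Type u) := xstar ⋙ fsub
  -- the epimorphism in the coherent topos
  have hepi : Epi (Limits.Sigma.desc (fun i => Y.map (p i))) := by
    constructor
    intro W a b hab
    apply aux_joint_epi c' p hp
    intro i
    have := Sigma.ι (fun i => Y.obj (c' i)) i ≫= hab
    rwa [← Category.assoc, ← Category.assoc, Sigma.ι_desc] at this
  -- transfer instances
  have i1 : PreservesColimitsOfSize.{0, 0} xstar := preservesColimitsOfSize_shrink.{0, u, 0, u} xstar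
  have i2 : xstar.PreservesEpimorphisms := inferInstance
  have i3 : F1.PreservesEpimorphisms := Functor.preservesEpimorphisms_comp xstar fsub
  have i4 : PreservesColimitsOfShape (Discrete α) fsub := inferInstance
  have i5 : PreservesColimitsOfShape (Discrete α) F1 := by
    have : PreservesColimitsOfShape (Discrete α) xstar := inferInstance
    exact comp_preservesColimitsOfShape xstar fsub
  have hepi2 : Epi (F1.map (Limits.Sigma.desc (fun i => Y.map (p i)))) :=
    F1.map_epi _
  have heq : Limits.Sigma.desc (fun i => F1.map (Y.map (p i))) =
      sigmaComparison F1 (fun i => Y.obj (c' i)) ≫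
        F1.map (Limits.Sigma.desc (fun i => Y.map (p i))) := by
    apply Sigma.hom_ext
    intro i
    rw [← Category.assoc, Sigma.ι_desc, ι_comp_sigmaComparison,
      ← F1.map_comp, Sigma.ι_desc]
  have hepi3 : Epi (Limits.Sigma.desc (fun i => F1.map (Y.map (p i)))) := by
    rw [heq]; exact epi_comp _ _
  have hd : Limits.Sigma.desc (fun i => F1.map (Y.map (p i))) ≫ u =
      Limits.Sigma.desc (fun i => F1.map (Y.map (p i))) ≫ v := by
    apply Sigma.hom_ext
    intro i
    rw [← Category.assoc, Sigma.ι_desc, ← Category.assoc, Sigma.ι_desc]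
    exact h i
  exact (cancel_epi _).mp hd
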